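/- Let M be a matroid on a finite ground set E with rk(E) ≥ 1, and let A ⊆ E attain Φ_M. Then for every subset Y ⊆ E, we have |A ∩ Y| ≤ Φ_M · rk(A ∩ Y). -/

import Mathlib

open Set Matroid

variable {α : Type*}

/-- The rank of a set `A` in a matroid `M`: the size of a largest independent subset of `A`. -/
noncomputable def mrk (M : Matroid α) (A : Set α) : ℕ :=
  sSup {n : ℕ | ∃ I, M.Indep I ∧ I ⊆ A ∧ I.ncard = n}

/-- The total weight of a set of elements. -/
noncomputable def wSum (w : α → ℝ) (S : Set α) : ℝ := ∑ᶠ e ∈ S, w e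

/-- `B` is a minimum-weight base of `M` with respect to the weights `w`. -/
def IsMinWeightBase (M : Matroid α) (w : α → ℝ) (B : Set α) : Prop :=
  M.IsBase B ∧ ∀ B', M.IsBase B' → wSum w B ≤ wSum w B'

/-- A circuit: an inclusion-wise minimal dependent set. -/
def IsCircuit (M : Matroid α) (C : Set α) : Prop :=
  C ⊆ M.E ∧ ¬ M.Indep C ∧ ∀ x ∈ C, M.Indep (C \ {x})

/-- The fractional base packing number `Φ_M`. -/
noncomputable def PhiM (M : Matroid α) : ℝ :=
  sInf {x : ℝ | ∃ A ⊆ M.E, mrk M (M.E \ A) < mrk M M.E ∧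
    x = (A.ncard : ℝ) / ((mrk M M.E : ℝ) - (mrk M (M.E \ A) : ℝ))}

/-- `A` attains the fractional packing number of `M`. -/
def AttainsPhi (M : Matroid α) (A : Set α) : Prop :=
  A ⊆ M.E ∧ mrk M (M.E \ A) < mrk M M.E ∧
    (A.ncard : ℝ) / ((mrk M M.E : ℝ) - (mrk M (M.E \ A) : ℝ)) = PhiM M

/-- The fractional base covering number `β_M`. -/
noncomputable def BetaM (M : Matroid α) : ℝ :=
  sSup {x : ℝ | ∃ A ⊆ M.E, A.Nonempty ∧ x = (A.ncard : ℝ) / (mrk M A : ℝ)}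

/-- The relative load of an element `e` in a base collection `Bs` of size `k`. -/
noncomputable def relLoad {k : ℕ} (Bs : Fin k → Set α) (e : α) : ℝ :=
  (({i | e ∈ Bs i} : Set (Fin k)).ncard : ℝ) / (k : ℝ)

lemma mrk_set_bddAbove (M : Matroid α) (hfin : M.E.Finite) (A : Set α) :
    BddAbove {n : ℕ | ∃ I, M.Indep I ∧ I ⊆ A ∧ I.ncard = n} := by
  refine ⟨M.E.ncard, ?_⟩
  rintro n ⟨I, hI, -, rfl⟩
  exact ncard_le_ncard hI.subset_ground hfin

lemma le_mrk (M : Matroid α) (hfin : M.E.Finite) {I A : Set α} (hI : M.Indep I) (hIA : I ⊆ A) :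
    I.ncard ≤ mrk M A :=
  le_csSup (mrk_set_bddAbove M hfin A) ⟨I, hI, hIA, rfl⟩

lemma exists_mrk (M : Matroid α) (hfin : M.E.Finite) (A : Set α) :
    ∃ I, M.Indep I ∧ I ⊆ A ∧ I.ncard = mrk M A :=
by
  have h0 : (0:ℕ) ∈ {n : ℕ | ∃ I, M.Indep I ∧ I ⊆ A ∧ I.ncard = n} :=
    ⟨∅, M.empty_indep, empty_subset _, by simp⟩
  exact Nat.sSup_mem ⟨0, h0⟩ (mrk_set_bddAbove M hfin A)

lemma mrk_mono (M : Matroid α) (hfin : M.E.Finite) {X Y : Set α} (h : X ⊆ Y) :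
    mrk M X ≤ mrk M Y := by
  obtain ⟨I, hI, hIX, hcard⟩ := exists_mrk M hfin X
  exact hcard ▸ le_mrk M hfin hI (hIX.trans h)

lemma mrk_union_le (M : Matroid α) (hfin : M.E.Finite) (X Z : Set α) :
    mrk M (X ∪ Z) ≤ mrk M X + mrk M Z := by
  obtain ⟨I, hI, hIU, hcard⟩ := exists_mrk M hfin (X ∪ Z)
  have hfinI : I.Finite := hfin.subset hI.subset_ground
  have hIZ : I \ X ⊆ Z := fun x hx => (hIU hx.1).resolve_left hx.2
  calc mrk M (X ∪ Z) = I.ncard := hcard.symm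
    _ = (I ∩ X).ncard + (I \ X).ncard := (ncard_inter_add_ncard_diff_eq_ncard I X hfinI).symm
    _ ≤ mrk M X + mrk M Z :=
        add_le_add (le_mrk M hfin (hI.subset inter_subset_left) inter_subset_right)
          (le_mrk M hfin (hI.subset diff_subset) hIZ)

lemma phiSet_nonneg (M : Matroid α) :
    ∀ x ∈ {x : ℝ | ∃ A ⊆ M.E, mrk M (M.E \ A) < mrk M M.E ∧
      x = (A.ncard : ℝ) / ((mrk M M.E : ℝ) - (mrk M (M.E \ A) : ℝ))}, 0 ≤ x := by
  rintro x ⟨B, -, hlt, rfl⟩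
  exact div_nonneg (Nat.cast_nonneg _) (sub_nonneg.mpr (Nat.cast_le.mpr hlt.le))

/-- If `A` attains `Φ_M`, then `|A ∩ Y| ≤ Φ_M · rk(A ∩ Y)` for every `Y ⊆ E`. -/
theorem stmt_9 (M : Matroid α) (hfin : M.E.Finite) (hrk : 1 ≤ mrk M M.E)
    (A : Set α) (hA : AttainsPhi M A) :
    ∀ Y ⊆ M.E, ((A ∩ Y).ncard : ℝ) ≤ PhiM M * (mrk M (A ∩ Y) : ℝ) := by
  intro Y hY
  obtain ⟨hAE, hAlt, hAeq⟩ := hA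
  set rE := mrk M M.E with hrE
  set rA := mrk M (M.E \ A) with hrA
  have hd : (0:ℝ) < (rE : ℝ) - (rA : ℝ) := sub_pos.mpr (Nat.cast_lt.mpr hAlt)
  have hPhi0 : 0 ≤ PhiM M := by
    rw [← hAeq]; exact div_nonneg (Nat.cast_nonneg _) hd.le
  have hAcard : (A.ncard : ℝ) = PhiM M * ((rE : ℝ) - (rA : ℝ)) := by
    rw [← hAeq, div_mul_cancel₀]; exact hd.ne'
  -- the set E \ (A \ Y)
  have hset : M.E \ (A \ Y) = (M.E \ A) ∪ (A ∩ Y) := by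
    ext x
    simp only [mem_diff, mem_union, mem_inter_iff]
    constructor
    · rintro ⟨hxE, hx⟩
      by_cases hxA : x ∈ A
      · exact Or.inr ⟨hxA, by_contra fun h => hx ⟨hxA, h⟩⟩
      · exact Or.inl ⟨hxE, hxA⟩
    · rintro (⟨hxE, hxA⟩ | ⟨hxA, hxY⟩)
      · exact ⟨hxE, fun h => hxA h.1⟩
      · exact ⟨hAE hxA, fun h => h.2 hxY⟩
  set rA' := mrk M (M.E \ (A \ Y)) with hrA'
  have hsub : (rA' : ℝ) ≤ (rA : ℝ) + (mrk M (A ∩ Y) : ℝ) := by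
    have := mrk_union_le M hfin (M.E \ A) (A ∩ Y)
    rw [hrA', hset]
    exact_mod_cast this
  set rAY := (mrk M (A ∩ Y) : ℝ) with hrAY
  -- key: Φ * ((rE - rA) - rAY) ≤ |A \ Y|
  have hkey : PhiM M * (((rE : ℝ) - (rA : ℝ)) - rAY) ≤ ((A \ Y).ncard : ℝ) := by
    by_cases hcase : rA' < rE
    · have hmem : (((A \ Y).ncard : ℝ) / ((rE : ℝ) - (rA' : ℝ))) ∈
          {x : ℝ | ∃ B ⊆ M.E, mrk M (M.E \ B) < mrk M M.E ∧
            x = (B.ncard : ℝ) / ((mrk M M.E : ℝ) - (mrk M (M.E \ B) : ℝ))} :=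
        ⟨A \ Y, (diff_subset.trans hAE), hcase, rfl⟩
      have hle : PhiM M ≤ ((A \ Y).ncard : ℝ) / ((rE : ℝ) - (rA' : ℝ)) :=
        csInf_le ⟨0, fun x hx => phiSet_nonneg M x hx⟩ hmem
      have hd' : (0:ℝ) < (rE : ℝ) - (rA' : ℝ) := sub_pos.mpr (Nat.cast_lt.mpr hcase)
      have h1 : PhiM M * ((rE : ℝ) - (rA' : ℝ)) ≤ ((A \ Y).ncard : ℝ) := by
        rw [← le_div_iff₀ hd']; exact hle
      refine le_trans (mul_le_mul_of_nonneg_left ?_ hPhi0) h1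
      linarith
    · push_neg at hcase
      have : ((rE : ℝ) - (rA : ℝ)) - rAY ≤ 0 := by
        have : (rE : ℝ) ≤ (rA' : ℝ) := Nat.cast_le.mpr hcase
        linarith
      exact le_trans (mul_nonpos_of_nonneg_of_nonpos hPhi0 this) (Nat.cast_nonneg _)
  have hsplit : (A.ncard : ℝ) = ((A ∩ Y).ncard : ℝ) + ((A \ Y).ncard : ℝ) := by
    have := ncard_inter_add_ncard_diff_eq_ncard A Y (hfin.subset hAE)
    exact_mod_cast this.symm
  have := hAcard
  nlinarith [hkey, hsplit]
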